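/- In the probit model, let w = 1{⟨x, β⟩ + μ > 0} with x ~ N(0, I), β ≠ 0, and partition x = (x_s, x_t) with corresponding coefficient blocks β_s ≠ 0, β_t ≠ 0. Let γ_s = ‖β_s‖/‖β‖, γ_t = ‖β_t‖/‖β‖ (so γ_s² + γ_t² = 1), and let π(x_s) = 1{⟨x_s, β_s⟩ ≥ Φ^{-1}(1−α)·‖β_s‖} for α ∈ (0,1). Then E[w·π(x_s)] = ∫_{Φ^{-1}(1−α)}^∞ Φ((γ_s·z + μ·‖β‖^{-1})/γ_t)·φ(z) dz. -/

import Mathlib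

open MeasureTheory ProbabilityTheory

noncomputable def phi (x : ℝ) : ℝ := (Real.sqrt (2 * Real.pi))⁻¹ * Real.exp (-x ^ 2 / 2)

noncomputable def Phi (t : ℝ) : ℝ := ∫ z in Set.Iic t, phi z

/-- The standard normal quantile function. -/
noncomputable def Phiinv (p : ℝ) : ℝ := sInf {t : ℝ | p ≤ Phi t}

open Real NNReal ENNReal

lemma pdf_conv_identity {v1 v2 : ℝ} (h1 : 0 < v1) (h2 : 0 < v2) (x z : ℝ) :
    gaussianPDFReal 0 (.mk v1 h1.le) x * gaussianPDFReal 0 (.mk v2 h2.le) (z - x)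
      = gaussianPDFReal 0 (.mk (v1 + v2) (by positivity)) z *
        gaussianPDFReal (v1 * z / (v1 + v2)) (.mk (v1 * v2 / (v1 + v2)) (by positivity)) x := by
  simp only [gaussianPDFReal, NNReal.coe_mk, sub_zero]
  rw [mul_mul_mul_comm, mul_mul_mul_comm (√(2 * π * (v1 + v2)))⁻¹, ← Real.exp_add,
    ← Real.exp_add, ← mul_inv, ← mul_inv]
  have h12 : 0 < v1 + v2 := by positivity
  have e1 : Real.sqrt (2 * π * v1) * Real.sqrt (2 * π * v2)
      = Real.sqrt (2 * π * (v1 + v2)) * Real.sqrt (2 * π * (v1 * v2 / (v1 + v2))) := by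
    rw [← Real.sqrt_mul (by positivity), ← Real.sqrt_mul (by positivity)]
    congr 1
    field_simp
  rw [e1]
  congr 1
  congr 1
  field_simp
  ring

lemma gaussian_conv (v1 v2 : ℝ≥0) :
    ((gaussianReal 0 v1).prod (gaussianReal 0 v2)).map (fun p => p.1 + p.2)
      = gaussianReal 0 (v1 + v2) := by
  rcases eq_or_ne v1 0 with rfl | hv1
  · rw [gaussianReal_zero_var, Measure.dirac_prod, Measure.map_map measurable_add
      measurable_prodMk_left]
    simp [Function.comp_def]
  rcases eq_or_ne v2 0 with rfl | hv2
  · rw [gaussianReal_zero_var, Measure.prod_dirac, Measure.map_map measurable_add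
      measurable_prodMk_right]
    simp [Function.comp_def]
  have h1 : (0:ℝ) < v1 := lt_of_le_of_ne v1.coe_nonneg (by exact_mod_cast (Ne.symm hv1))
  have h2 : (0:ℝ) < v2 := lt_of_le_of_ne v2.coe_nonneg (by exact_mod_cast (Ne.symm hv2))
  have hv12 : v1 + v2 ≠ 0 := by positivity
  have hv1' : v1 = .mk (v1:ℝ) h1.le := rfl
  have hv2' : v2 = .mk (v2:ℝ) h2.le := rfl
  have hv12' : v1 + v2 = .mk ((v1:ℝ) + v2) (by positivity) := by ext; simp
  have hvm : ((NNReal.mk ((v1:ℝ) * v2 / (v1 + v2)) (by positivity) : ℝ≥0)) ≠ 0 := by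
    intro h
    have := congrArg (fun x : ℝ≥0 => (x:ℝ)) h
    simp only [NNReal.coe_mk, NNReal.coe_zero] at this
    have hpos : (0:ℝ) < (v1:ℝ) * v2 / (v1 + v2) := by positivity
    exact hpos.ne' this
  ext s hs
  rw [Measure.map_apply measurable_add hs, gaussianReal_of_var_ne_zero _ hv1,
    gaussianReal_of_var_ne_zero _ hv2, gaussianReal_of_var_ne_zero _ hv12,
    withDensity_apply _ hs]
  rw [Measure.prod_apply (measurable_add hs)]
  have step1 : ∀ x : ℝ, (volume.withDensity (gaussianPDF 0 v2))
      (Prod.mk x ⁻¹' ((fun p : ℝ × ℝ => p.1 + p.2) ⁻¹' s))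
      = ∫⁻ z, s.indicator (fun _ => (1:ℝ≥0∞)) z * gaussianPDF 0 v2 (z - x) := by
    intro x
    rw [withDensity_apply _ (measurable_prodMk_left (measurable_add hs))]
    have : ∫⁻ y in Prod.mk x ⁻¹' ((fun p : ℝ × ℝ => p.1 + p.2) ⁻¹' s), gaussianPDF 0 v2 y
        = ∫⁻ y, s.indicator (fun _ => (1:ℝ≥0∞)) (y + x) * gaussianPDF 0 v2 y := by
      rw [← lintegral_indicator (measurable_prodMk_left (measurable_add hs)) (gaussianPDF 0 v2)]
      congr 1
      ext y
      by_cases h : x + y ∈ s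
      · rw [Set.indicator_of_mem
            (show y ∈ Prod.mk x ⁻¹' ((fun p : ℝ × ℝ => p.1 + p.2) ⁻¹' s) from h),
          Set.indicator_of_mem (show y + x ∈ s by rwa [add_comm]), one_mul]
      · rw [Set.indicator_of_notMem
            (show y ∉ Prod.mk x ⁻¹' ((fun p : ℝ × ℝ => p.1 + p.2) ⁻¹' s) from h),
          Set.indicator_of_notMem (show y + x ∉ s by rwa [add_comm]), zero_mul]
    rw [this, ← lintegral_add_right_eq_self
      (fun z => s.indicator (fun _ => (1:ℝ≥0∞)) z * gaussianPDF 0 v2 (z - x)) x]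
    simp
  simp_rw [step1]
  have hmeas_ind : Measurable (s.indicator (fun _ => (1:ℝ≥0∞))) :=
    measurable_const.indicator hs
  set F : ℝ → ℝ → ℝ≥0∞ := fun x z => s.indicator (fun _ => (1:ℝ≥0∞)) z * gaussianPDF 0 v2 (z - x)
    with hF
  have hmeas2 : Measurable (Function.uncurry F) :=
    (hmeas_ind.comp measurable_snd).mul
      ((measurable_gaussianPDF 0 v2).comp (measurable_snd.sub measurable_fst))
  rw [lintegral_withDensity_eq_lintegral_mul _ (measurable_gaussianPDF 0 v1)
    (Measurable.lintegral_prod_right hmeas2)]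
  simp_rw [Pi.mul_apply]
  have swap : ∫⁻ x, gaussianPDF 0 v1 x *
        ∫⁻ z, F x z
      = ∫⁻ z, ∫⁻ x, gaussianPDF 0 v1 x * F x z := by
    simp_rw [← lintegral_const_mul _ hmeas2.of_uncurry_left]
    exact lintegral_lintegral_swap
      (((measurable_gaussianPDF 0 v1).comp measurable_fst).mul hmeas2).aemeasurable
  rw [swap]
  have key : ∀ z : ℝ, ∫⁻ x, gaussianPDF 0 v1 x * F x z
      = s.indicator (fun _ => (1:ℝ≥0∞)) z * gaussianPDF 0 (v1 + v2) z := by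
    intro z
    simp only [hF]
    simp_rw [mul_left_comm _ (s.indicator (fun _ => (1:ℝ≥0∞)) z) _]
    rw [lintegral_const_mul _ (show Measurable fun x : ℝ =>
      gaussianPDF 0 v1 x * gaussianPDF 0 v2 (z - x) from (measurable_gaussianPDF 0 v1).mul
        ((measurable_gaussianPDF 0 v2).comp (measurable_id.const_sub z)))]
    congr 1
    have : ∀ x : ℝ, gaussianPDF 0 v1 x * gaussianPDF 0 v2 (z - x)
        = ENNReal.ofReal (gaussianPDFReal 0 (.mk ((v1:ℝ) + v2) (by positivity)) z) *
          gaussianPDF ((v1:ℝ) * z / (v1 + v2)) (.mk ((v1:ℝ) * v2 / (v1 + v2)) (by positivity)) x := by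
      intro x
      rw [gaussianPDF_def, gaussianPDF_def, gaussianPDF_def,
        ← ENNReal.ofReal_mul (gaussianPDFReal_nonneg _ _ _),
        ← ENNReal.ofReal_mul (gaussianPDFReal_nonneg _ _ _)]
      congr 1
      exact pdf_conv_identity h1 h2 x z
    simp_rw [this]
    rw [lintegral_const_mul _ (measurable_gaussianPDF _ _), lintegral_gaussianPDF_eq_one _ hvm,
      mul_one, gaussianPDF_def, hv12']
  simp_rw [key]
  rw [← lintegral_indicator hs (gaussianPDF 0 (v1+v2))]
  congr 1
  ext z
  by_cases h : z ∈ s <;> simp [h]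

lemma map_pi_gaussian : ∀ (n : ℕ) (β : Fin n → ℝ),
    (Measure.pi fun _ : Fin n => gaussianReal 0 1).map (fun x => ∑ i, x i * β i)
      = gaussianReal 0 (∑ i, ‖β i‖₊ ^ 2) := by
  intro n
  induction n with
  | zero =>
    intro β
    simp only [Finset.univ_eq_empty, Finset.sum_empty]
    rw [show (fun x : Fin 0 → ℝ => (0:ℝ)) = (fun _ => 0) from rfl, Measure.map_const]
    simp [gaussianReal_zero_var]
  | succ n ih =>
    intro β
    have hmp := measurePreserving_piFinSuccAbove (fun _ : Fin (n+1) => gaussianReal 0 1) 0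
    set e := MeasurableEquiv.piFinSuccAbove (fun _ : Fin (n+1) => ℝ) 0 with he
    have hfe : (fun x : Fin (n+1) → ℝ => ∑ i, x i * β i)
        = (fun p : ℝ × (Fin n → ℝ) => p.1 * β 0 + ∑ j, p.2 j * β j.succ) ∘ e := by
      funext x
      simp only [Function.comp_apply, he, MeasurableEquiv.piFinSuccAbove_apply,
        Fin.insertNthEquiv, Fin.removeNth, Fin.succAbove_zero, Equiv.coe_fn_symm_mk]
      rw [Fin.sum_univ_succ]
    have msum : Measurable (fun y : Fin n → ℝ => ∑ j, y j * β j.succ) :=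
      Finset.measurable_sum _ fun j _ => (measurable_pi_apply j).mul_const _
    have hmg : Measurable (fun p : ℝ × (Fin n → ℝ) => p.1 * β 0 + ∑ j, p.2 j * β j.succ) :=
      (measurable_fst.mul_const _).add (msum.comp measurable_snd)
    rw [hfe, ← Measure.map_map hmg e.measurable, hmp.map_eq]
    have hsplit : (fun p : ℝ × (Fin n → ℝ) => p.1 * β 0 + ∑ j, p.2 j * β j.succ)
        = (fun q : ℝ × ℝ => q.1 + q.2) ∘
          (Prod.map (fun a : ℝ => a * β 0) (fun y : Fin n → ℝ => ∑ j, y j * β j.succ)) := rfl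
    rw [hsplit, ← Measure.map_map measurable_add
        ((measurable_mul_const (β 0)).prodMap msum),
      ← Measure.map_prod_map _ _ (measurable_mul_const (β 0)) msum,
      gaussianReal_map_mul_const, ih]
    rw [show gaussianReal (β 0 * 0) (NNReal.mk (β 0 ^ 2) (sq_nonneg _) * 1) = gaussianReal 0 (‖β 0‖₊ ^ 2) by
      congr 1
      · ring
      · ext; simp [sq_abs]]
    rw [gaussian_conv]
    congr 1
    rw [Fin.sum_univ_succ]

lemma phi_eq : gaussianPDFReal 0 1 = phi := by
  funext x
  simp [gaussianPDFReal, phi]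

lemma gaussian_Ioi (v : ℝ≥0) (hv : v ≠ 0) (a : ℝ) :
    gaussianReal 0 v (Set.Ioi a) = ENNReal.ofReal (Phi (-a / Real.sqrt v)) := by
  have hσ : (0:ℝ) < Real.sqrt v := Real.sqrt_pos.2
    (lt_of_le_of_ne v.coe_nonneg (by exact_mod_cast (Ne.symm hv)))
  have hmap : gaussianReal 0 v = (gaussianReal 0 1).map (· * Real.sqrt v) := by
    rw [gaussianReal_map_mul_const]
    congr 1
    · simp
    · ext
      simp [Real.sq_sqrt v.coe_nonneg]
  rw [hmap, Measure.map_apply (measurable_mul_const _) measurableSet_Ioi]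
  have hpre : (· * Real.sqrt v) ⁻¹' Set.Ioi a = Set.Ioi (a / Real.sqrt v) := by
    ext z
    simp only [Set.mem_preimage, Set.mem_Ioi]
    rw [div_lt_iff₀ hσ]
  rw [hpre, gaussianReal_apply_eq_integral 0 one_ne_zero, phi_eq]
  congr 1
  have : ∀ x : ℝ, phi x = phi (-x) := by
    intro x; simp [phi]
  rw [show (∫ x in Set.Ioi (a / Real.sqrt v), phi x)
      = ∫ x in Set.Ioi (a / Real.sqrt v), phi (-x) by
    exact setIntegral_congr_fun measurableSet_Ioi fun x _ => this x]
  rw [integral_comp_neg_Ioi, Phi, neg_div]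

lemma phi_nonneg (x : ℝ) : 0 ≤ phi x := by
  unfold phi; positivity

lemma phi_integrable : Integrable phi := by
  rw [← phi_eq]; exact integrable_gaussianPDFReal 0 1

lemma Phi_nonneg (t : ℝ) : 0 ≤ Phi t :=
  setIntegral_nonneg measurableSet_Iic fun x _ => phi_nonneg x

lemma Phi_mono : Monotone Phi := fun a b hab =>
  setIntegral_mono_set phi_integrable.integrableOn
    (Filter.Eventually.of_forall fun x => phi_nonneg x)
    (HasSubset.Subset.eventuallyLE (Set.Iic_subset_Iic.2 hab))

lemma Phi_measurable : Measurable Phi := Phi_mono.measurable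

/-- Value of the optimal probit targeting policy: with
`w = 1{⟨x_s, β_s⟩ + ⟨x_t, β_t⟩ + μ > 0}` and
`π(x_s) = 1{⟨x_s, β_s⟩ ≥ Φ⁻¹(1-α)‖β_s‖}`, where `γ_s = ‖β_s‖/‖β‖` and
`γ_t = ‖β_t‖/‖β‖`,
`E[w π(x_s)] = ∫_{Φ⁻¹(1-α)}^∞ Φ((γ_s z + μ ‖β‖⁻¹)/γ_t) φ(z) dz`. -/
theorem value_probit_policy (ds dt : ℕ) (βs : Fin ds → ℝ) (βt : Fin dt → ℝ)
    (μ α : ℝ) (hβs : βs ≠ 0) (hβt : βt ≠ 0) (hα : α ∈ Set.Ioo (0 : ℝ) 1) :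
    (∫ p : (Fin ds → ℝ) × (Fin dt → ℝ),
        (if 0 < (∑ i, p.1 i * βs i) + (∑ j, p.2 j * βt j) + μ then (1 : ℝ) else 0) *
          (if Phiinv (1 - α) * Real.sqrt (∑ i, (βs i) ^ 2) ≤ ∑ i, p.1 i * βs i
            then (1 : ℝ) else 0)
        ∂((Measure.pi fun _ : Fin ds => gaussianReal 0 1).prod
            (Measure.pi fun _ : Fin dt => gaussianReal 0 1)))
      = ∫ z in Set.Ioi (Phiinv (1 - α)),
          Phi (((Real.sqrt (∑ i, (βs i) ^ 2) / Real.sqrt ((∑ i, (βs i) ^ 2) + ∑ j, (βt j) ^ 2)) * z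
                + μ * (Real.sqrt ((∑ i, (βs i) ^ 2) + ∑ j, (βt j) ^ 2))⁻¹)
              / (Real.sqrt (∑ j, (βt j) ^ 2) / Real.sqrt ((∑ i, (βs i) ^ 2) + ∑ j, (βt j) ^ 2)))
            * phi z := by
  classical
  set c := Phiinv (1 - α) with hc
  set vs : ℝ≥0 := ∑ i, ‖βs i‖₊ ^ 2 with hvs
  set vt : ℝ≥0 := ∑ j, ‖βt j‖₊ ^ 2 with hvt
  have hvs' : ((vs : ℝ)) = ∑ i, (βs i) ^ 2 := by
    push_cast [hvs]; simp [sq_abs]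
  have hvt' : ((vt : ℝ)) = ∑ j, (βt j) ^ 2 := by
    push_cast [hvt]; simp [sq_abs]
  have hvs0 : vs ≠ 0 := by
    intro h
    apply hβs
    funext i
    have h' : ((vs:ℝ)) = 0 := by rw [h]; simp
    rw [hvs'] at h'
    have := (Finset.sum_eq_zero_iff_of_nonneg (fun i _ => sq_nonneg (βs i))).1 h' i
      (Finset.mem_univ i)
    simpa using (pow_eq_zero_iff two_ne_zero).mp this
  have hvt0 : vt ≠ 0 := by
    intro h
    apply hβt
    funext j
    have h' : ((vt:ℝ)) = 0 := by rw [h]; simp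
    rw [hvt'] at h'
    have := (Finset.sum_eq_zero_iff_of_nonneg (fun j _ => sq_nonneg (βt j))).1 h' j
      (Finset.mem_univ j)
    simpa using (pow_eq_zero_iff two_ne_zero).mp this
  have hvsR : (0:ℝ) < vs := lt_of_le_of_ne vs.coe_nonneg (by exact_mod_cast (Ne.symm hvs0))
  have hvtR : (0:ℝ) < vt := lt_of_le_of_ne vt.coe_nonneg (by exact_mod_cast (Ne.symm hvt0))
  set σs := Real.sqrt (∑ i, (βs i) ^ 2) with hσs
  set σt := Real.sqrt (∑ j, (βt j) ^ 2) with hσt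
  set σb := Real.sqrt ((∑ i, (βs i) ^ 2) + ∑ j, (βt j) ^ 2) with hσb
  have hσsv : σs = Real.sqrt vs := by rw [hσs, hvs']
  have hσtv : σt = Real.sqrt vt := by rw [hσt, hvt']
  have hσs0 : 0 < σs := by rw [hσsv]; exact Real.sqrt_pos.2 hvsR
  have hσt0 : 0 < σt := by rw [hσtv]; exact Real.sqrt_pos.2 hvtR
  have hσb0 : 0 < σb := by
    rw [hσb]; refine Real.sqrt_pos.2 ?_; rw [← hvs', ← hvt']; positivity
  -- the target set
  set T : Set (ℝ × ℝ) := {q | 0 < q.1 + q.2 + μ ∧ c * σs ≤ q.1} with hT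
  have hTmeas : MeasurableSet T := by
    apply MeasurableSet.inter
    · exact measurableSet_lt measurable_const
        (((measurable_fst.add measurable_snd).add_const μ))
    · exact measurableSet_le measurable_const measurable_fst
  set F : (Fin ds → ℝ) → ℝ := fun x => ∑ i, x i * βs i with hF
  set G : (Fin dt → ℝ) → ℝ := fun y => ∑ j, y j * βt j with hG
  have hFm : Measurable F := Finset.measurable_sum _ fun i _ => (measurable_pi_apply i).mul_const _
  have hGm : Measurable G := Finset.measurable_sum _ fun j _ => (measurable_pi_apply j).mul_const _
  -- Step 1: LHS as measure of a set
  have step1 : (∫ p : (Fin ds → ℝ) × (Fin dt → ℝ),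
        (if 0 < F p.1 + G p.2 + μ then (1 : ℝ) else 0) *
          (if c * σs ≤ F p.1 then (1 : ℝ) else 0)
        ∂((Measure.pi fun _ : Fin ds => gaussianReal 0 1).prod
            (Measure.pi fun _ : Fin dt => gaussianReal 0 1)))
      = ((((Measure.pi fun _ : Fin ds => gaussianReal 0 1).prod
            (Measure.pi fun _ : Fin dt => gaussianReal 0 1)))
          ((fun p => (F p.1, G p.2)) ⁻¹' T)).toReal := by
    have hpm : Measurable fun p : (Fin ds → ℝ) × (Fin dt → ℝ) => (F p.1, G p.2) :=
      (hFm.comp measurable_fst).prodMk (hGm.comp measurable_snd)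
    rw [← measureReal_def, ← integral_indicator_one
      (show MeasurableSet ((fun p : (Fin ds → ℝ) × (Fin dt → ℝ) => (F p.1, G p.2)) ⁻¹' T) from hpm hTmeas)]
    congr 1
    funext p
    by_cases h1 : 0 < F p.1 + G p.2 + μ <;> by_cases h2 : c * σs ≤ F p.1 <;>
      simp [Set.indicator_apply, Set.mem_preimage, hT, h1, h2, Set.mem_setOf_eq]
  -- Step 2: push forward to 2D Gaussians
  have step2 : (((Measure.pi fun _ : Fin ds => gaussianReal 0 1).prod
        (Measure.pi fun _ : Fin dt => gaussianReal 0 1)))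
        ((fun p => (F p.1, G p.2)) ⁻¹' T)
      = ((gaussianReal 0 vs).prod (gaussianReal 0 vt)) T := by
    rw [← map_pi_gaussian ds βs, ← map_pi_gaussian dt βt,
      Measure.map_prod_map _ _ hFm hGm,
      Measure.map_apply (hFm.prodMap hGm) hTmeas]
    rfl
  -- Step 3: Fubini
  have step3 : ((gaussianReal 0 vs).prod (gaussianReal 0 vt)) T
      = ∫⁻ s, (if c * σs ≤ s then ENNReal.ofReal (Phi ((s + μ) / σt)) else 0)
          ∂(gaussianReal 0 vs) := by
    rw [Measure.prod_apply hTmeas]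
    congr 1
    funext s
    have hslice : Prod.mk s ⁻¹' T
        = if c * σs ≤ s then Set.Ioi (-(s + μ)) else (∅ : Set ℝ) := by
      by_cases h : c * σs ≤ s
      · rw [if_pos h]
        ext t
        simp only [Set.mem_preimage, hT, Set.mem_setOf_eq, Set.mem_Ioi]
        constructor
        · rintro ⟨h1, -⟩; linarith
        · intro h1; exact ⟨by linarith, h⟩
      · rw [if_neg h]
        ext t
        simp only [Set.mem_preimage, hT, Set.mem_setOf_eq, Set.mem_empty_iff_false, iff_false]
        rintro ⟨-, h2⟩; exact h h2
    rw [hslice]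
    by_cases h : c * σs ≤ s
    · rw [if_pos h, if_pos h, gaussian_Ioi vt hvt0, neg_neg, hσtv]
    · rw [if_neg h, if_neg h, measure_empty]
  -- Step 4: change variables to standard normal
  have hmapσs : gaussianReal 0 vs = (gaussianReal 0 1).map (· * σs) := by
    rw [gaussianReal_map_mul_const]
    congr 1
    · simp
    · ext
      simp [hσsv, Real.sq_sqrt vs.coe_nonneg]
  have hInd : Measurable (fun s : ℝ =>
      (if c * σs ≤ s then ENNReal.ofReal (Phi ((s + μ) / σt)) else 0)) := by
    have : (fun s : ℝ => (if c * σs ≤ s then ENNReal.ofReal (Phi ((s + μ) / σt)) else 0))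
        = (Set.Ici (c * σs)).indicator
            (fun s => ENNReal.ofReal (Phi ((s + μ) / σt))) := by
      funext s
      by_cases h : c * σs ≤ s <;>
        simp [Set.indicator_apply, Set.mem_Ici, h]
    rw [this]
    exact Measurable.indicator
      ((Phi_mono.measurable.comp ((measurable_id.add_const μ).div_const σt)).ennreal_ofReal)
      measurableSet_Ici
  have step4 : (∫⁻ s, (if c * σs ≤ s then ENNReal.ofReal (Phi ((s + μ) / σt)) else 0)
          ∂(gaussianReal 0 vs))
      = ∫⁻ z, ENNReal.ofReal (phi z) *
          (if c ≤ z then ENNReal.ofReal (Phi ((z * σs + μ) / σt)) else 0) := by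
    rw [hmapσs, lintegral_map hInd (measurable_mul_const σs)]
    rw [gaussianReal_of_var_ne_zero _ one_ne_zero,
      lintegral_withDensity_eq_lintegral_mul _ (measurable_gaussianPDF 0 1)
        (show Measurable fun a : ℝ =>
          if c * σs ≤ a * σs then ENNReal.ofReal (Phi ((a * σs + μ) / σt)) else 0
          from hInd.comp (measurable_mul_const σs))]
    congr 1
    funext z
    rw [Pi.mul_apply]
    congr 1
    · rw [gaussianPDF_def, phi_eq]
    · congr 1
      rw [eq_iff_iff]
      constructor
      · intro h; exact (mul_le_mul_iff_of_pos_right hσs0).1 h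
      · intro h; exact (mul_le_mul_iff_of_pos_right hσs0).2 h
  -- RHS
  have harg : ∀ z : ℝ, ((σs / σb) * z + μ * σb⁻¹) / (σt / σb) = (z * σs + μ) / σt := by
    intro z
    field_simp
  set f : ℝ → ℝ := fun z => Phi ((z * σs + μ) / σt) * phi z with hf
  have hphim : Measurable phi := by rw [← phi_eq]; exact measurable_gaussianPDFReal 0 1
  have hfm : Measurable f := ((Phi_measurable.comp
      (((measurable_mul_const σs).add_const μ).div_const σt))).mul hphim
  have hrhs : (∫ z in Set.Ioi c, Phi (((σs / σb) * z + μ * σb⁻¹) / (σt / σb)) * phi z)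
      = (∫⁻ z, ENNReal.ofReal ((Set.Ioi c).indicator f z)).toReal := by
    rw [setIntegral_congr_fun measurableSet_Ioi
      (fun z _ => by rw [harg z] : Set.EqOn _ f (Set.Ioi c))]
    rw [← integral_indicator measurableSet_Ioi]
    rw [integral_eq_lintegral_of_nonneg_ae]
    · exact Filter.Eventually.of_forall fun z => Set.indicator_nonneg
        (fun x _ => mul_nonneg (Phi_nonneg _) (phi_nonneg _)) z
    · exact (hfm.indicator measurableSet_Ioi).aestronglyMeasurable
  have hne : ∀ᵐ (z : ℝ) ∂(volume : Measure ℝ), z ≠ c := by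
    rw [ae_iff]
    simp only [not_not]
    simpa [Set.setOf_eq_eq_singleton] using Real.volume_singleton (a := c)
  have hae : (∫⁻ z, ENNReal.ofReal (phi z) *
        (if c ≤ z then ENNReal.ofReal (Phi ((z * σs + μ) / σt)) else 0))
      = ∫⁻ z, ENNReal.ofReal ((Set.Ioi c).indicator f z) := by
    apply lintegral_congr_ae
    filter_upwards [hne] with z hz
    by_cases h : c < z
    · rw [if_pos h.le, Set.indicator_of_mem (show z ∈ Set.Ioi c from h), hf, ← ENNReal.ofReal_mul (phi_nonneg z),
        mul_comm (phi z)]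
    · have h' : ¬ c ≤ z := fun hle => h (lt_of_le_of_ne hle (Ne.symm hz))
      rw [if_neg h', Set.indicator_of_notMem (show z ∉ Set.Ioi c from h), mul_zero, ENNReal.ofReal_zero]
  calc (∫ p : (Fin ds → ℝ) × (Fin dt → ℝ),
        (if 0 < (∑ i, p.1 i * βs i) + (∑ j, p.2 j * βt j) + μ then (1 : ℝ) else 0) *
          (if c * σs ≤ ∑ i, p.1 i * βs i then (1 : ℝ) else 0)
        ∂((Measure.pi fun _ : Fin ds => gaussianReal 0 1).prod
            (Measure.pi fun _ : Fin dt => gaussianReal 0 1)))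
      = (∫ p : (Fin ds → ℝ) × (Fin dt → ℝ),
        (if 0 < F p.1 + G p.2 + μ then (1 : ℝ) else 0) *
          (if c * σs ≤ F p.1 then (1 : ℝ) else 0)
        ∂((Measure.pi fun _ : Fin ds => gaussianReal 0 1).prod
            (Measure.pi fun _ : Fin dt => gaussianReal 0 1))) := rfl
    _ = ((((Measure.pi fun _ : Fin ds => gaussianReal 0 1).prod
            (Measure.pi fun _ : Fin dt => gaussianReal 0 1)))
          ((fun p => (F p.1, G p.2)) ⁻¹' T)).toReal := step1
    _ = (((gaussianReal 0 vs).prod (gaussianReal 0 vt)) T).toReal := by rw [step2]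
    _ = (∫⁻ s, (if c * σs ≤ s then ENNReal.ofReal (Phi ((s + μ) / σt)) else 0)
          ∂(gaussianReal 0 vs)).toReal := by rw [step3]
    _ = (∫⁻ z, ENNReal.ofReal (phi z) *
          (if c ≤ z then ENNReal.ofReal (Phi ((z * σs + μ) / σt)) else 0)).toReal := by
        rw [step4]
    _ = (∫⁻ z, ENNReal.ofReal ((Set.Ioi c).indicator f z)).toReal := by rw [hae]
    _ = ∫ z in Set.Ioi c, Phi (((σs / σb) * z + μ * σb⁻¹) / (σt / σb)) * phi z := hrhs.symm
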